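/- arXiv:2409.18650 — 2 statements merged into one kernel-verified Lean document; each statement's English description precedes it below -/
import Mathlib

section
/- For every x ∈ c_c, the subdifferential of f at x is empty: there exists no continuous linear functional x* on (c_c, ‖·‖_{ℓ²}) such that f(y) ≥ f(x) + x*(y − x) for all y ∈ c_c. -/
open scoped ENNReal

noncomputable section

abbrev ell2 : Type := lp (fun _ : ℕ => ℝ) 2

lemma memℓp_of_finite_support {x : ℕ → ℝ} (h : (Function.support x).Finite) :
    Memℓp x 2 := by
  apply memℓp_gen
  apply summable_of_finite_support
  refine h.subset ?_
  intro n hn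
  simp only [Function.mem_support] at hn ⊢
  intro h0
  exact hn (by simp [h0])

def ccSubmodule : Submodule ℝ ell2 where
  carrier := {x | (Function.support fun n => (x : ℕ → ℝ) n).Finite}
  add_mem' := by
    intro a b ha hb
    refine Set.Finite.subset (ha.union hb) ?_
    intro n hn
    simp only [Function.mem_support, Set.mem_union] at hn ⊢
    by_contra h
    push_neg at h
    exact hn (by simp [lp.coeFn_add, h.1, h.2])
  zero_mem' := by
    simp only [Set.mem_setOf_eq]
    convert Set.finite_empty
    ext n
    simp [lp.coeFn_zero]
  smul_mem' := by
    intro c a ha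
    refine Set.Finite.subset ha ?_
    intro n hn
    simp only [Function.mem_support] at hn ⊢
    intro h
    exact hn (by simp [lp.coeFn_smul, h])

abbrev cc : Type := ccSubmodule

def seqOf (x : cc) : ℕ → ℝ := fun n => ((x : ell2) : ℕ → ℝ) n

def fSeq (x : ℕ → ℝ) : ℝ :=
  ∑' n : ℕ, (((n : ℝ) + 1) ^ 2 / 2) * (x n - (((n : ℝ) + 1) ^ 2)⁻¹) ^ 2

def fcc (x : cc) : ℝ := fSeq (seqOf x)

/-- The standard unit sequence `e_n` as an element of `c_c`. -/
def eVec (n : ℕ) : cc :=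
  ⟨lp.single 2 n (1 : ℝ), by
    refine Set.Finite.subset (Set.finite_singleton n) ?_
    intro m hm
    simp only [Function.mem_support] at hm
    by_contra hmn
    exact hm (lp.single_apply_ne 2 n _ (by simpa using hmn))⟩

/-- The backward-difference operation on raw sequences, with `x_{-1} := 0`. -/
def Aseq (x : ℕ → ℝ) : ℕ → ℝ := fun n => x n - (if n = 0 then 0 else x (n - 1))

lemma support_Aseq {x : ℕ → ℝ} (h : (Function.support x).Finite) :
    (Function.support (Aseq x)).Finite := by
  refine Set.Finite.subset (h.union (h.image (· + 1))) ?_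
  intro n hn
  simp only [Function.mem_support, Aseq] at hn
  by_contra hc
  simp only [Set.mem_union, Function.mem_support, Set.mem_image, not_or, not_exists] at hc
  obtain ⟨h1, h2⟩ := hc
  apply hn
  rcases n with _ | m
  · simpa using h1
  · have hx1 : x (m + 1) = 0 := not_not.mp h1
    have hx : x m = 0 := by
      by_contra hxm
      exact (h2 m ⟨hxm, rfl⟩).elim
    simp [hx1, hx]

lemma mem_ccSubmodule_of_mk {x : ℕ → ℝ} (hx : Memℓp x 2)
    (h : (Function.support x).Finite) : (⟨x, hx⟩ : ell2) ∈ ccSubmodule := h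

/-- The operator `A : c_c → c_c`, `(Ax)_n = x_n - x_{n-1}` (with `x_{-1} := 0`). -/
def Aop (x : cc) : cc :=
  ⟨⟨Aseq (seqOf x), memℓp_of_finite_support (support_Aseq x.2)⟩,
    mem_ccSubmodule_of_mk _ (support_Aseq x.2)⟩

/-- The Fenchel conjugate of `f`, as a function on `ℓ²`. -/
def fstar (y : ell2) : ℝ :=
  ∑' n : ℕ, (((n : ℝ) + 1) ^ 2)⁻¹ *
    ((1 / 2) * ((y : ℕ → ℝ) n) ^ 2 + (y : ℕ → ℝ) n)

/-- The (formal) adjoint of `A`, acting on `ℓ²` sequences: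
`(A*y)_n = y_n - y_{n+1}`. -/
def AstarSeq (y : ell2) : ℕ → ℝ := fun n => (y : ℕ → ℝ) n - (y : ℕ → ℝ) (n + 1)

/-! ### Auxiliary lemmas for the proof -/

set_option maxHeartbeats 1000000

private lemma summable_base :
    Summable (fun n : ℕ => (((n : ℝ) + 1) ^ 2 / 2) * ((((n : ℝ) + 1) ^ 2)⁻¹) ^ 2) := by
  have h0 : Summable (fun n : ℕ => 1 / ((n : ℝ)) ^ 2) :=
    Real.summable_one_div_nat_pow.2 one_lt_two
  have h1 : Summable (fun n : ℕ => 1 / (((n : ℕ) + 1 : ℕ) : ℝ) ^ 2) :=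
    (summable_nat_add_iff 1).2 h0
  refine (h1.mul_left (1/2)).congr ?_
  intro n
  have hne : ((n : ℝ) + 1) ^ 2 ≠ 0 := by positivity
  have hcast : (((n : ℕ) + 1 : ℕ) : ℝ) = (n : ℝ) + 1 := by push_cast; ring
  rw [hcast]
  field_simp

instance : NormedSpace ℝ cc := Submodule.normedSpace ccSubmodule

private lemma summable_g (x : cc) :
    Summable (fun n : ℕ => (((n : ℝ) + 1) ^ 2 / 2) * (seqOf x n - (((n : ℝ) + 1) ^ 2)⁻¹) ^ 2) := by
  set b : ℕ → ℝ := fun n => (((n : ℝ) + 1) ^ 2 / 2) * ((((n : ℝ) + 1) ^ 2)⁻¹) ^ 2 with hb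
  set g : ℕ → ℝ := fun n => (((n : ℝ) + 1) ^ 2 / 2) * (seqOf x n - (((n : ℝ) + 1) ^ 2)⁻¹) ^ 2 with hg
  have hdiff : Summable (fun n => g n - b n) := by
    apply summable_of_finite_support
    refine x.2.subset ?_
    intro n hn
    simp only [Function.mem_support] at hn ⊢
    intro h0
    apply hn
    simp only [hg, hb, seqOf] at *
    rw [h0]
    ring
  exact (summable_base.add hdiff).congr (fun n => by show b n + (g n - b n) = g n; ring)

private lemma fcc_add_single (x : cc) (n : ℕ) (t : ℝ) :
    fcc (x + t • eVec n) = fcc x +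
      ((n : ℝ) + 1) ^ 2 * (t * (seqOf x n - (((n : ℝ) + 1) ^ 2)⁻¹) + t ^ 2 / 2) := by
  have hseq : ∀ m, seqOf (x + t • eVec n) m = seqOf x m + (if m = n then t else 0) := by
    intro m
    simp only [seqOf, Submodule.coe_add, SetLike.val_smul]
    rw [lp.coeFn_add, Pi.add_apply, lp.coeFn_smul, Pi.smul_apply]
    congr 1
    show t • ((lp.single 2 n (1:ℝ) : ell2) : ℕ → ℝ) m = _
    by_cases hm : m = n
    · subst hm; rw [lp.single_apply_self]; simp
    · rw [lp.single_apply_ne 2 n _ hm]; simp [hm]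
  set a : ℝ := seqOf x n with ha
  set c : ℝ := (((n : ℝ) + 1) ^ 2)⁻¹ with hc
  set Δ : ℝ := ((n : ℝ) + 1) ^ 2 * (t * (a - c) + t ^ 2 / 2) with hΔ
  have hfun : ∀ m : ℕ, (((m : ℝ) + 1) ^ 2 / 2) * (seqOf (x + t • eVec n) m - (((m : ℝ) + 1) ^ 2)⁻¹) ^ 2
      = (((m : ℝ) + 1) ^ 2 / 2) * (seqOf x m - (((m : ℝ) + 1) ^ 2)⁻¹) ^ 2
        + (if m = n then Δ else 0) := by
    intro m
    rw [hseq m]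
    by_cases hm : m = n
    · subst hm; rw [if_pos rfl, if_pos rfl, hΔ]; simp only [ha, hc]; ring
    · simp [hm]
  show fSeq (seqOf (x + t • eVec n)) = fSeq (seqOf x) + Δ
  unfold fSeq
  rw [tsum_congr hfun]
  rw [Summable.tsum_add (summable_g x) ((summable_of_ne_finset_zero (s := {n}) (by
        intro m hm
        simp only [Finset.mem_singleton] at hm
        simp [hm])))]
  simp


/-- the subdifferential of `f` is empty at every point of `c_c`. -/
theorem subdifferential_empty (x : cc) :
    ¬ ∃ xs : cc →L[ℝ] ℝ, ∀ y : cc, fcc y ≥ fcc x + xs (y - x) := by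
  rintro ⟨xs, h⟩
  -- Step 1: xs (eVec n) = (n+1)^2 * (x_n - (n+1)^{-2}) for every n
  have key : ∀ n : ℕ, xs (eVec n) = ((n : ℝ) + 1) ^ 2 * (seqOf x n - (((n : ℝ) + 1) ^ 2)⁻¹) := by
    intro n
    set P : ℝ := ((n : ℝ) + 1) ^ 2 with hP
    have hPpos : 0 < P := by positivity
    have hPne : P ≠ 0 := ne_of_gt hPpos
    set a : ℝ := seqOf x n - (((n : ℝ) + 1) ^ 2)⁻¹ with ha
    set s : ℝ := xs (eVec n) with hs
    have hq : ∀ t : ℝ, P * (t * a + t ^ 2 / 2) ≥ t * s := by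
      intro t
      have := h (x + t • eVec n)
      rw [fcc_add_single x n t, add_sub_cancel_left, map_smul] at this
      simpa using this
    set β : ℝ := s - P * a with hβ
    have hq2 : ∀ t : ℝ, P * t ^ 2 / 2 ≥ t * β := by
      intro t
      simp only [hβ]
      nlinarith [hq t]
    have hβ0 : β = 0 := by
      have h1 := hq2 (β / P)
      have e1 : P * (β / P) = β := mul_div_cancel₀ β hPne
      have e2 : P * (β / P) ^ 2 / 2 = β ^ 2 / P / 2 := by field_simp
      have e3 : (β / P) * β = β ^ 2 / P := by field_simp
      rw [e2, e3] at h1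
      have hnn : 0 ≤ β ^ 2 / P := by positivity
      have h4 : β ^ 2 / P = 0 := by linarith
      field_simp at h4
      simpa using h4
    show s = P * a
    linarith [hβ0]
  -- Step 2: beyond the support, xs (eVec n) = -1
  obtain ⟨N, hN⟩ := x.2.bddAbove
  have hzero : ∀ n, N < n → seqOf x n = 0 := by
    intro n hn
    by_contra h0
    exact absurd (hN (Function.mem_support.2 h0)) (not_le.2 hn)
  have hneg1 : ∀ n, N < n → xs (eVec n) = -1 := by
    intro n hn
    rw [key n, hzero n hn]
    have hne : ((n : ℝ) + 1) ^ 2 ≠ 0 := by positivity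
    field_simp
    ring
  -- Step 3: contradiction with boundedness
  set C : ℝ := ‖xs‖ with hC
  have hCnn : 0 ≤ C := by rw [hC]; positivity
  have main : ∀ K : ℕ, (K : ℝ) ≤ C * Real.sqrt K := by
    intro K
    set S : Finset ℕ := Finset.Ico (N + 1) (N + 1 + K) with hS
    set y : cc := ∑ i ∈ S, eVec i with hy
    have hcard : S.card = K := by simp [hS]
    have hxsy : xs y = -(K : ℝ) := by
      rw [hy, map_sum]
      have hc : ∀ i ∈ S, xs (eVec i) = -1 := by
        intro i hi
        simp only [hS, Finset.mem_Ico] at hi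
        exact hneg1 i (by omega)
      rw [Finset.sum_congr rfl hc]
      simp [hcard]
    have hynorm : ‖y‖ = Real.sqrt K := by
      have hcoe : ((y : ell2)) = ∑ i ∈ S, lp.single 2 i ((fun _ : ℕ => (1:ℝ)) i) := by
        simp only [hy]
        rw [Submodule.coe_sum]
        rfl
      have h2 : ‖(y : ell2)‖ ^ ((2:ℝ≥0∞)).toReal = ∑ i ∈ S, ‖(1:ℝ)‖ ^ ((2:ℝ≥0∞)).toReal := by
        rw [hcoe]
        exact lp.norm_sum_single (by norm_num) _ S
      have h2' : ‖(y : ell2)‖ ^ (2:ℕ) = (K : ℝ) := by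
        have ht : ((2:ℝ≥0∞)).toReal = (2:ℝ) := by norm_num
        rw [ht] at h2
        rw [show (‖(y : ell2)‖ ^ (2:ℕ)) = ‖(y : ell2)‖ ^ (2:ℝ) by norm_num]
        simpa [hcard] using h2
      have hnn : (0:ℝ) ≤ ‖(y : ell2)‖ := norm_nonneg _
      have hcc : ‖y‖ = ‖(y : ell2)‖ := rfl
      rw [hcc, ← h2', Real.sqrt_sq hnn]
    have hb : |xs y| ≤ C * ‖y‖ := xs.le_opNorm y
    rw [hxsy, hynorm] at hb
    calc (K : ℝ) ≤ |(-(K:ℝ))| := by simp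
      _ ≤ C * Real.sqrt K := hb
  -- choose K large
  set K : ℕ := ⌈C ^ 2⌉₊ + 1 with hK
  have hKlarge : C ^ 2 < (K : ℝ) := by
    calc C ^ 2 ≤ (⌈C ^ 2⌉₊ : ℝ) := Nat.le_ceil _
      _ < (K : ℝ) := by simp [hK]
  have hKpos : (0:ℝ) < K := lt_of_le_of_lt (sq_nonneg C) hKlarge
  have h1 := main K
  set r : ℝ := Real.sqrt K with hr
  have hrpos : 0 < r := Real.sqrt_pos.2 hKpos
  have hr2 : r ^ 2 = (K : ℝ) := Real.sq_sqrt (le_of_lt hKpos)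
  nlinarith [sq_nonneg (r - C)]
end
end

section
/- The point 0 is a global minimizer of f∘A on c_c, with minimal value f(A0) = f(0) = (1/2) Σ_{n=1}^∞ n^{-2} = π²/12. -/
open scoped ENNReal

noncomputable section

lemma summable_inv_sq : Summable (fun n : ℕ => (((n:ℝ)+1)^2)⁻¹) := by
  have h := hasSum_zeta_two.summable
  have h1 := (summable_nat_add_iff (f := fun n : ℕ => (1:ℝ)/(n:ℝ)^2) 1).2 h
  refine h1.congr (fun n => ?_)
  push_cast
  rw [one_div]

lemma tsum_inv_sq : ∑' n : ℕ, (((n:ℝ)+1)^2)⁻¹ = Real.pi ^ 2 / 6 := by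
  have h1 := (hasSum_nat_add_iff' (f := fun n : ℕ => (1:ℝ)/(n:ℝ)^2) 1).2 hasSum_zeta_two
  have h2 : HasSum (fun n : ℕ => (((n:ℝ)+1)^2)⁻¹) (Real.pi^2/6) := by
    convert h1 using 1
    · rfl
    · funext n
      push_cast
      rw [one_div]
    · norm_num
  exact h2.tsum_eq

lemma seqOf_zero : seqOf (0 : cc) = fun _ => 0 := by
  funext n
  simp [seqOf]

lemma fcc_zero_eq : fcc 0 = (1 / 2) * ∑' n : ℕ, (((n : ℝ) + 1) ^ 2)⁻¹ := by
  unfold fcc fSeq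
  rw [seqOf_zero, ← tsum_mul_left]
  refine tsum_congr (fun n => ?_)
  have h : ((n:ℝ)+1)^2 ≠ 0 := by positivity
  field_simp
  ring

lemma key_lower (y : ℕ → ℝ) (s : Finset ℕ) (hs : ∀ n ∉ s, y n = 0)
    (hsum : ∑ n ∈ s, y n = 0) :
    (1 / 2) * ∑' n : ℕ, (((n : ℝ) + 1) ^ 2)⁻¹ ≤ fSeq y := by
  have hterm : ∀ n : ℕ, (((n:ℝ)+1)^2/2) * (y n - (((n:ℝ)+1)^2)⁻¹)^2
      = (1/2) * (((n:ℝ)+1)^2)⁻¹ + ((((n:ℝ)+1)^2/2) * (y n)^2 - y n) := by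
    intro n
    have h : ((n:ℝ)+1)^2 ≠ 0 := by positivity
    field_simp
    ring
  have hb : ∀ n ∉ s, ((((n:ℝ)+1)^2/2) * (y n)^2 - y n) = 0 := by
    intro n hn
    rw [hs n hn]
    ring
  have hbsum : Summable (fun n : ℕ => (((n:ℝ)+1)^2/2) * (y n)^2 - y n) := by
    apply summable_of_finite_support
    refine s.finite_toSet.subset (fun n hn => ?_)
    by_contra hns
    exact hn (hb n hns)
  have hasum : Summable (fun n : ℕ => (1/2) * (((n:ℝ)+1)^2)⁻¹) :=
    summable_inv_sq.mul_left _
  unfold fSeq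
  calc (1/2) * ∑' n : ℕ, (((n:ℝ)+1)^2)⁻¹
      = ∑' n : ℕ, (1/2) * (((n:ℝ)+1)^2)⁻¹ := (tsum_mul_left).symm
    _ ≤ ∑' n : ℕ, ((1/2) * (((n:ℝ)+1)^2)⁻¹ + ((((n:ℝ)+1)^2/2) * (y n)^2 - y n)) := by
        rw [Summable.tsum_add hasum hbsum, tsum_eq_sum hb]
        have : (0:ℝ) ≤ ∑ n ∈ s, ((((n:ℝ)+1)^2/2) * (y n)^2 - y n) := by
          rw [Finset.sum_sub_distrib, hsum, sub_zero]
          exact Finset.sum_nonneg (fun n _ => by positivity)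
        linarith
    _ = ∑' n : ℕ, (((n:ℝ)+1)^2/2) * (y n - (((n:ℝ)+1)^2)⁻¹)^2 :=
        tsum_congr (fun n => (hterm n).symm)

lemma seqOf_Aop (x : cc) : seqOf (Aop x) = Aseq (seqOf x) := rfl

lemma telescope_Aseq (u : ℕ → ℝ) (N : ℕ) (hN : ∀ n ≥ N, u n = 0) :
    ∑ n ∈ Finset.range (N + 1), Aseq u n = 0 := by
  set g : ℕ → ℝ := fun n => if n = 0 then 0 else u (n - 1) with hg
  have hAg : ∀ n, Aseq u n = g (n + 1) - g n := by
    intro n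
    cases n with
    | zero => simp [Aseq, g]
    | succ m => simp [Aseq, g]
  calc ∑ n ∈ Finset.range (N + 1), Aseq u n
      = ∑ n ∈ Finset.range (N + 1), (g (n + 1) - g n) :=
        Finset.sum_congr rfl (fun n _ => hAg n)
    _ = g (N + 1) - g 0 := Finset.sum_range_sub g (N + 1)
    _ = 0 := by simp [g, hN N le_rfl]

/-- `0` is a global minimizer of `f ∘ A`, with minimal value
`f(A0) = f(0) = (1/2) ∑ n⁻² = π²/12`. -/
theorem zero_minimizes_f_comp_A :
    (∀ x : cc, fcc (Aop 0) ≤ fcc (Aop x)) ∧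
    fcc (Aop 0) = fcc 0 ∧
    fcc 0 = (1 / 2) * ∑' n : ℕ, (((n : ℝ) + 1) ^ 2)⁻¹ ∧
    fcc 0 = Real.pi ^ 2 / 12 := by
  have h2 : fcc (Aop 0) = fcc 0 := by
    unfold fcc
    rw [seqOf_Aop, seqOf_zero]
    congr 1
    funext n
    simp [Aseq]
  refine ⟨?_, h2, fcc_zero_eq, by rw [fcc_zero_eq, tsum_inv_sq]; ring⟩
  intro x
  rw [h2, fcc_zero_eq]
  unfold fcc
  rw [seqOf_Aop]
  rw [← fcc_zero_eq, fcc_zero_eq]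
  set u := seqOf x with hu
  have hfin : (Function.support u).Finite := x.2
  obtain ⟨N, hNb⟩ := hfin.bddAbove
  have hN : ∀ n ≥ N + 1, u n = 0 := by
    intro n hn
    by_contra h
    have := hNb (Function.mem_support.2 h)
    omega
  refine key_lower (Aseq u) (Finset.range (N + 2)) ?_ (telescope_Aseq u (N + 1) hN)
  intro n hn
  simp only [Finset.mem_range, not_lt] at hn
  have h1 : u n = 0 := hN n (by omega)
  have h2 : u (n - 1) = 0 := hN (n - 1) (by omega)
  simp [Aseq, h1, h2]
end
end
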